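/- Let A and B be real symmetric positive definite d×d matrices and let 0 < ε < 1 be such that (1 − ε)·B ⪯ A ⪯ (1 + ε)·B in the Loewner order. Then for every b ∈ ℝ^d, ‖B⁻¹b − A⁻¹b‖_A ≤ ε·‖A⁻¹b‖_A, where ‖v‖_A = √(vᵀAv). -/

import Mathlib

open Matrix

/-- The `A`-norm of a vector: `‖v‖_A = √(vᵀ A v)`. -/
noncomputable def anorm {d : ℕ} (A : Matrix (Fin d) (Fin d) ℝ) (v : Fin d → ℝ) : ℝ :=
  Real.sqrt (v ⬝ᵥ A.mulVec v)

section AuxPrecond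

set_option linter.unusedSectionVars false

variable {n : Type*} [Fintype n] [DecidableEq n]

open scoped MatrixOrder in
noncomputable def Matrix.PosSemidef.sqrt {A : Matrix n n ℝ} (_ : A.PosSemidef) : Matrix n n ℝ :=
  CFC.sqrt A

open scoped MatrixOrder in
lemma Matrix.PosSemidef.sqrt_mul_self {A : Matrix n n ℝ} (hA : A.PosSemidef) :
    hA.sqrt * hA.sqrt = A :=
  CFC.sqrt_mul_sqrt_self A (Matrix.nonneg_iff_posSemidef.mpr hA)

open scoped MatrixOrder in
lemma Matrix.PosSemidef.posSemidef_sqrt {A : Matrix n n ℝ} (hA : A.PosSemidef) :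
    hA.sqrt.PosSemidef :=
  Matrix.nonneg_iff_posSemidef.mp (CFC.sqrt_nonneg A)

lemma sqrt_det_isUnit {A : Matrix n n ℝ} (hA : A.PosDef) :
    IsUnit hA.posSemidef.sqrt.det := by
  have h : hA.posSemidef.sqrt.det * hA.posSemidef.sqrt.det = A.det := by
    rw [← det_mul, hA.posSemidef.sqrt_mul_self]
  refine isUnit_iff_ne_zero.mpr fun h0 => ?_
  rw [h0, mul_zero] at h
  exact hA.det_pos.ne' h.symm

lemma sqrt_inv_conj {X : Matrix n n ℝ} (hX : X.PosDef) :
    hX.inv.posSemidef.sqrt * X * hX.inv.posSemidef.sqrt = 1 := by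
  set Q := hX.inv.posSemidef.sqrt with hQ
  have hQQ : Q * Q = X⁻¹ := hX.inv.posSemidef.sqrt_mul_self
  have hXi' : X⁻¹ * X = 1 := nonsing_inv_mul X (isUnit_iff_ne_zero.mpr hX.det_pos.ne')
  have hmid : X * (Q * Q) * X = X := by
    rw [hQQ, mul_assoc, hXi', mul_one]
  have hM : (Q * X * Q) * (Q * X * Q) = Q * X * Q := by
    calc (Q * X * Q) * (Q * X * Q) = Q * (X * (Q * Q) * X) * Q := by
          simp only [mul_assoc]
    _ = Q * X * Q := by rw [hmid, mul_assoc]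
  have hu : IsUnit (Q * X * Q) := by
    have h1 := sqrt_det_isUnit hX.inv
    rw [← hQ] at h1
    refine (isUnit_iff_isUnit_det _).mpr ?_
    rw [det_mul, det_mul]
    exact (h1.mul (isUnit_iff_ne_zero.mpr hX.det_pos.ne')).mul h1
  exact hu.mul_left_cancel (by rw [mul_one, hM])

lemma posDef_conj {X Q : Matrix n n ℝ} (hX : X.PosDef) (hQ : IsUnit Q.det) :
    (Qᴴ * X * Q).PosDef := by
  refine .of_dotProduct_mulVec_pos (isHermitian_conjTranspose_mul_mul Q hX.isHermitian) fun x hx => ?_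
  have hx' : Q *ᵥ x ≠ 0 := by
    intro h
    exact hx ((Matrix.mulVec_injective_iff_isUnit.mpr
      ((isUnit_iff_isUnit_det _).mpr hQ)).eq_iff.mp (by simpa using h))
  have := hX.dotProduct_mulVec_pos hx'
  simpa only [star_mulVec, dotProduct_mulVec, vecMul_vecMul] using this

lemma posDef_smul {X : Matrix n n ℝ} (hX : X.PosDef) {c : ℝ} (hc : 0 < c) :
    (c • X).PosDef := by
  refine .of_dotProduct_mulVec_pos ?_ fun x hx => ?_
  · show (c • X)ᴴ = c • X
    rw [conjTranspose_smul, star_trivial, hX.isHermitian.eq]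
  · rw [smul_mulVec, dotProduct_smul]
    exact smul_pos hc (hX.dotProduct_mulVec_pos hx)

lemma smul_matrix_inv {B : Matrix n n ℝ} (hB : IsUnit B.det) {c : ℝ} (hc : c ≠ 0) :
    (c • B)⁻¹ = c⁻¹ • B⁻¹ := by
  apply inv_eq_right_inv
  rw [Matrix.smul_mul, Matrix.mul_smul, smul_smul, mul_inv_cancel₀ hc, one_smul,
    mul_nonsing_inv B hB]

lemma inv_order {X Y : Matrix n n ℝ} (hX : X.PosDef) (hY : Y.PosDef)
    (h : (Y - X).PosSemidef) : (X⁻¹ - Y⁻¹).PosSemidef := by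
  set Q := hY.inv.posSemidef.sqrt with hQdef
  have hQherm : Qᴴ = Q := hY.inv.posSemidef.posSemidef_sqrt.isHermitian.eq
  have hQQ : Q * Q = Y⁻¹ := hY.inv.posSemidef.sqrt_mul_self
  have hQdet : IsUnit Q.det := sqrt_det_isUnit hY.inv
  have hQYQ : Q * Y * Q = 1 := sqrt_inv_conj hY
  -- Z := Q * X * Q is PosDef
  have hZ : (Q * X * Q).PosDef := by
    have := posDef_conj hX hQdet
    rwa [hQherm] at this
  set Z := Q * X * Q with hZdef
  -- 1 - Z is PSD
  have h1Z : ((1 : Matrix n n ℝ) - Z).PosSemidef := by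
    have := h.conjTranspose_mul_mul_same Q
    rwa [hQherm, Matrix.mul_sub, Matrix.sub_mul, hQYQ] at this
  -- W := sqrt of Z⁻¹
  set W := hZ.inv.posSemidef.sqrt with hWdef
  have hWherm : Wᴴ = W := hZ.inv.posSemidef.posSemidef_sqrt.isHermitian.eq
  have hWW : W * W = Z⁻¹ := hZ.inv.posSemidef.sqrt_mul_self
  have hWZW : W * Z * W = 1 := sqrt_inv_conj hZ
  have h2 : (Z⁻¹ - (1 : Matrix n n ℝ)).PosSemidef := by
    have := h1Z.conjTranspose_mul_mul_same W
    rwa [hWherm, Matrix.mul_sub, Matrix.sub_mul, Matrix.mul_one, hWW,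
      show W * Z * W = 1 from hWZW] at this
  -- conjugate back by Q
  have h3 := h2.conjTranspose_mul_mul_same Q
  rw [hQherm, Matrix.mul_sub, Matrix.sub_mul, Matrix.mul_one, hQQ] at h3
  have hQZQ : Q * Z⁻¹ * Q = X⁻¹ := by
    have hQu : Q * Q⁻¹ = 1 := mul_nonsing_inv Q hQdet
    have hQu' : Q⁻¹ * Q = 1 := nonsing_inv_mul Q hQdet
    rw [hZdef, Matrix.mul_inv_rev, Matrix.mul_inv_rev]
    simp only [← mul_assoc]
    rw [hQu, Matrix.one_mul, mul_assoc, hQu', Matrix.mul_one]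
  rwa [show Q * Z⁻¹ * Q = X⁻¹ from hQZQ] at h3

lemma dot_self_nonneg (v : n → ℝ) : 0 ≤ v ⬝ᵥ v :=
  Finset.sum_nonneg fun i _ => mul_self_nonneg _

lemma dot_sym {S : Matrix n n ℝ} (hS : Sᵀ = S) (u v : n → ℝ) :
    u ⬝ᵥ S *ᵥ v = (S *ᵥ u) ⬝ᵥ v := by
  rw [dotProduct_mulVec, ← vecMul_transpose, hS]

lemma key_vec {S : Matrix n n ℝ} (hS : Sᵀ = S) {ε : ℝ} (hε : 0 < ε)
    (h1 : ∀ v, v ⬝ᵥ S *ᵥ v - v ⬝ᵥ v ≤ ε * (v ⬝ᵥ v))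
    (h2 : ∀ v, -(ε * (v ⬝ᵥ v)) ≤ v ⬝ᵥ S *ᵥ v - v ⬝ᵥ v)
    (y w : n → ℝ) (hw : w = S *ᵥ y - y) :
    w ⬝ᵥ w ≤ ε ^ 2 * (y ⬝ᵥ y) := by
  have hq : y ⬝ᵥ S *ᵥ w = w ⬝ᵥ S *ᵥ y := by
    rw [dot_sym hS y w, dotProduct_comm]
  have hg : y ⬝ᵥ w = w ⬝ᵥ y := dotProduct_comm _ _
  have ha : w ⬝ᵥ w = w ⬝ᵥ S *ᵥ y - w ⬝ᵥ y := by
    nth_rewrite 2 [hw]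
    rw [dotProduct_sub]
  have key : ∀ t : ℝ, 2 * t * (w ⬝ᵥ w) ≤ ε * (t ^ 2 * (y ⬝ᵥ y) + w ⬝ᵥ w) := by
    intro t
    have e1 := h1 (t • y + w)
    have e2 := h2 (t • y - w)
    simp only [mulVec_add, mulVec_sub, mulVec_smul, dotProduct_add, add_dotProduct,
      dotProduct_sub, sub_dotProduct, dotProduct_smul, smul_dotProduct, smul_eq_mul] at e1 e2
    rw [hq, hg] at e1 e2
    rw [ha]
    nlinarith [e1, e2]
  have ha0 : 0 ≤ w ⬝ᵥ w := dot_self_nonneg w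
  have hb0 : 0 ≤ y ⬝ᵥ y := dot_self_nonneg y
  rcases eq_or_lt_of_le ha0 with h0 | h0
  · nlinarith
  rcases eq_or_lt_of_le hb0 with hb | hb
  · exfalso
    have hk := key ε
    rw [← hb] at hk
    nlinarith
  · set a := w ⬝ᵥ w
    set b := y ⬝ᵥ y
    have ht := key (Real.sqrt a / Real.sqrt b)
    have hsa : Real.sqrt a ^ 2 = a := Real.sq_sqrt ha0
    have hsb : Real.sqrt b ^ 2 = b := Real.sq_sqrt hb0
    have ht2 : (Real.sqrt a / Real.sqrt b) ^ 2 * b = a := by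
      rw [div_pow, hsa, hsb, div_mul_cancel₀ _ hb.ne']
    rw [ht2] at ht
    -- ht : 2 * (√a/√b) * a ≤ ε * (a + a)
    have htle : Real.sqrt a / Real.sqrt b ≤ ε := by nlinarith
    have ht0 : 0 ≤ Real.sqrt a / Real.sqrt b :=
      div_nonneg (Real.sqrt_nonneg _) (Real.sqrt_nonneg _)
    have hsq : (Real.sqrt a / Real.sqrt b) * (Real.sqrt a / Real.sqrt b) ≤ ε * ε :=
      mul_le_mul htle htle ht0 hε.le
    nlinarith [mul_le_mul_of_nonneg_right hsq hb0, ht2]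

lemma conjT_eq_transpose (M : Matrix n n ℝ) : Mᴴ = Mᵀ := by
  ext i j; simp [conjTranspose_apply]

end AuxPrecond

set_option maxHeartbeats 1000000 in
/-- If `(1 − ε)B ⪯ A ⪯ (1 + ε)B`, then one preconditioned solve satisfies
`‖B⁻¹b − A⁻¹b‖_A ≤ ε‖A⁻¹b‖_A`. -/
theorem preconditioner_one_step_error (d : ℕ)
    (A B : Matrix (Fin d) (Fin d) ℝ) (hA : A.PosDef) (hB : B.PosDef)
    (ε : ℝ) (hε0 : 0 < ε) (hε1 : ε < 1)
    (hlow : (A - (1 - ε) • B).PosSemidef)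
    (hup : ((1 + ε) • B - A).PosSemidef) :
    ∀ b : Fin d → ℝ,
      anorm A (B⁻¹.mulVec b - A⁻¹.mulVec b) ≤ ε * anorm A (A⁻¹.mulVec b) := by
  intro b
  have hAdet : IsUnit A.det := isUnit_iff_ne_zero.mpr hA.det_pos.ne'
  have hBdet : IsUnit B.det := isUnit_iff_ne_zero.mpr hB.det_pos.ne'
  set R := hA.posSemidef.sqrt with hRdef
  have hRherm : Rᴴ = R := hA.posSemidef.posSemidef_sqrt.isHermitian.eq
  have hRt : Rᵀ = R := by rw [← conjT_eq_transpose, hRherm]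
  have hRR : R * R = A := hA.posSemidef.sqrt_mul_self
  have hRdet : IsUnit R.det := sqrt_det_isUnit hA
  have hRi : R * R⁻¹ = 1 := mul_nonsing_inv R hRdet
  have hRi' : R⁻¹ * R = 1 := nonsing_inv_mul R hRdet
  have hBt : Bᵀ = B := by rw [← conjT_eq_transpose, hB.isHermitian.eq]
  set S := R * B⁻¹ * R with hSdef
  have hSt : Sᵀ = S := by
    rw [hSdef, transpose_mul, transpose_mul, transpose_nonsing_inv, hBt, hRt, mul_assoc]
  have hRAR : R * A⁻¹ * R = 1 := by
    rw [← hRR, Matrix.mul_inv_rev]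
    calc R * (R⁻¹ * R⁻¹) * R = R * R⁻¹ * (R⁻¹ * R) := by simp only [mul_assoc]
    _ = 1 := by rw [hRi, hRi', one_mul]
  -- Loewner bounds on inverses
  have h1m : 0 < 1 - ε := by linarith
  have h1p : 0 < 1 + ε := by linarith
  have hBl : ((1 - ε) • B).PosDef := posDef_smul hB h1m
  have hBu : ((1 + ε) • B).PosDef := posDef_smul hB h1p
  have hinv1 : (((1 - ε) • B)⁻¹ - A⁻¹).PosSemidef := inv_order hBl hA hlow
  have hinv2 : (A⁻¹ - ((1 + ε) • B)⁻¹).PosSemidef := inv_order hA hBu hup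
  rw [smul_matrix_inv hBdet h1m.ne'] at hinv1
  rw [smul_matrix_inv hBdet h1p.ne'] at hinv2
  -- conjugate by R
  have hc1 : ((1 - ε)⁻¹ • S - 1).PosSemidef := by
    have h := hinv1.conjTranspose_mul_mul_same R
    rwa [hRherm, Matrix.mul_sub, Matrix.sub_mul, Matrix.mul_smul, Matrix.smul_mul,
      hRAR, ← hSdef] at h
  have hc2 : ((1 : Matrix (Fin d) (Fin d) ℝ) - (1 + ε)⁻¹ • S).PosSemidef := by
    have h := hinv2.conjTranspose_mul_mul_same R
    rwa [hRherm, Matrix.mul_sub, Matrix.sub_mul, Matrix.mul_smul, Matrix.smul_mul,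
      hRAR, ← hSdef] at h
  -- scalar inequalities
  have h1v : ∀ v : Fin d → ℝ, v ⬝ᵥ S *ᵥ v - v ⬝ᵥ v ≤ ε * (v ⬝ᵥ v) := by
    intro v
    have h := hc2.dotProduct_mulVec_nonneg v
    simp only [star_trivial, sub_mulVec, one_mulVec, smul_mulVec, dotProduct_sub,
      dotProduct_smul, smul_eq_mul] at h
    have h' : (1 + ε)⁻¹ * (v ⬝ᵥ S *ᵥ v) ≤ v ⬝ᵥ v := by linarith
    have h'' := mul_le_mul_of_nonneg_left h' h1p.le
    rw [← mul_assoc, mul_inv_cancel₀ h1p.ne', one_mul] at h''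
    linarith
  have h2v : ∀ v : Fin d → ℝ, -(ε * (v ⬝ᵥ v)) ≤ v ⬝ᵥ S *ᵥ v - v ⬝ᵥ v := by
    intro v
    have h := hc1.dotProduct_mulVec_nonneg v
    simp only [star_trivial, sub_mulVec, one_mulVec, smul_mulVec, dotProduct_sub,
      dotProduct_smul, smul_eq_mul] at h
    have h' : v ⬝ᵥ v ≤ (1 - ε)⁻¹ * (v ⬝ᵥ S *ᵥ v) := by linarith
    have h'' := mul_le_mul_of_nonneg_left h' h1m.le
    rw [← mul_assoc, mul_inv_cancel₀ h1m.ne', one_mul] at h''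
    linarith
  -- set up vectors
  set x := A⁻¹ *ᵥ b with hxdef
  have hAx : A *ᵥ x = b := by
    rw [hxdef, mulVec_mulVec, mul_nonsing_inv A hAdet, one_mulVec]
  set e := B⁻¹ *ᵥ b - x with hedef
  set y := R *ᵥ x with hydef
  set w := R *ᵥ e with hwdef
  have hw : w = S *ᵥ y - y := by
    have hSy : S *ᵥ y = R *ᵥ (B⁻¹ *ᵥ b) := by
      calc S *ᵥ y = ((R * B⁻¹) * (R * R)) *ᵥ x := by
            rw [hydef, mulVec_mulVec, hSdef, mul_assoc]
        _ = (R * B⁻¹) *ᵥ (A *ᵥ x) := by rw [← mulVec_mulVec, hRR]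
        _ = R *ᵥ (B⁻¹ *ᵥ b) := by rw [hAx, mulVec_mulVec]
    rw [hSy, hwdef, hedef, mulVec_sub, hydef]
  have hkey : w ⬝ᵥ w ≤ ε ^ 2 * (y ⬝ᵥ y) := key_vec hSt hε0 h1v h2v y w hw
  have hea : e ⬝ᵥ A *ᵥ e = w ⬝ᵥ w := by
    rw [← hRR, ← mulVec_mulVec, dot_sym hRt, ← hwdef]
  have hxa : x ⬝ᵥ A *ᵥ x = y ⬝ᵥ y := by
    rw [← hRR, ← mulVec_mulVec, dot_sym hRt, ← hydef]
  show anorm A e ≤ ε * anorm A x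
  rw [anorm, anorm, hea, hxa]
  rw [show ε ^ 2 * (y ⬝ᵥ y) = (ε * Real.sqrt (y ⬝ᵥ y)) ^ 2 by
    rw [mul_pow, Real.sq_sqrt (dot_self_nonneg y)]] at hkey
  calc Real.sqrt (w ⬝ᵥ w) ≤ Real.sqrt ((ε * Real.sqrt (y ⬝ᵥ y)) ^ 2) :=
        Real.sqrt_le_sqrt hkey
  _ = ε * Real.sqrt (y ⬝ᵥ y) := Real.sqrt_sq (by positivity)
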